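/- Let B ∈ ℝ^{n×n} be positive definite (x·Bx > 0 for all x ≠ 0, not necessarily symmetric) and let B₀ ∈ ℝ^{n×n} be symmetric positive definite. Suppose there exist c₁, c₂ > 0 with x·Bx ≥ c₁ x·B₀x for all x and x·By ≤ c₂ (x·B₀x)^{1/2}(y·B₀y)^{1/2} for all x, y. Then x·B⁻¹x ≥ (c₁/c₂²) x·B₀⁻¹x for all x, and x·B⁻¹y ≤ c₁⁻¹ (x·B₀⁻¹x)^{1/2}(y·B₀⁻¹y)^{1/2} for all x, y. -/

import Mathlib

open Matrix

private theorem cs_aux {n : ℕ} {M : Matrix (Fin n) (Fin n) ℝ} (hM : M.PosDef)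
    (a b : Fin n → ℝ) :
    a ⬝ᵥ (M *ᵥ b) ≤ Real.sqrt (a ⬝ᵥ (M *ᵥ a)) * Real.sqrt (b ⬝ᵥ (M *ᵥ b)) := by
  have hMT : Mᵀ = M := by have := hM.1; simp at this; exact this.eq
  have hsym : ∀ u v : Fin n → ℝ, u ⬝ᵥ (M *ᵥ v) = v ⬝ᵥ (M *ᵥ u) := by
    intro u v
    rw [Matrix.dotProduct_mulVec, ← Matrix.mulVec_transpose, dotProduct_comm, hMT]
  set p := a ⬝ᵥ (M *ᵥ a) with hp'
  set q := b ⬝ᵥ (M *ᵥ b) with hq'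
  set r := a ⬝ᵥ (M *ᵥ b) with hr'
  have hp : 0 ≤ p := by simpa using hM.posSemidef.dotProduct_mulVec_nonneg a
  have hq : 0 ≤ q := by simpa using hM.posSemidef.dotProduct_mulVec_nonneg b
  rcases le_or_gt r 0 with h | h
  · exact h.trans (mul_nonneg (Real.sqrt_nonneg _) (Real.sqrt_nonneg _))
  have hb : b ≠ 0 := by
    rintro rfl
    rw [hr', Matrix.mulVec_zero, dotProduct_zero] at h
    exact lt_irrefl 0 h
  have hq0 : 0 < q := by simpa using hM.dotProduct_mulVec_pos hb
  have key : r ^ 2 ≤ p * q := by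
    have h0 : 0 ≤ (a - (r/q) • b) ⬝ᵥ (M *ᵥ (a - (r/q) • b)) := by simpa only [star_trivial] using hM.posSemidef.dotProduct_mulVec_nonneg (a - (r/q) • b)
    have expand : (a - (r/q) • b) ⬝ᵥ (M *ᵥ (a - (r/q) • b))
        = p - 2*(r/q)*r + (r/q)^2 * q := by
      simp only [Matrix.mulVec_sub, Matrix.mulVec_smul, sub_dotProduct, dotProduct_sub,
        smul_dotProduct, dotProduct_smul, smul_eq_mul]
      rw [hsym b a, ← hp', ← hq', ← hr']
      ring
    rw [expand] at h0
    have haux : 2*(r/q)*r - (r/q)^2*q = r^2/q := by field_simp; ring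
    have h1 : 0 ≤ p - r^2/q := by linarith
    rw [sub_nonneg, div_le_iff₀ hq0] at h1
    linarith
  have h2 : r ≤ Real.sqrt (p * q) := by
    calc r = Real.sqrt (r^2) := by rw [Real.sqrt_sq h.le]
    _ ≤ Real.sqrt (p*q) := Real.sqrt_le_sqrt key
  rwa [Real.sqrt_mul hp] at h2

/-- Spectral bounds transfer to inverses (Lemma A.3 / [ABV14, Lemma 3.1]). -/
theorem stmt4 (n : ℕ) (B B₀ : Matrix (Fin n) (Fin n) ℝ)
    (hB : ∀ x : Fin n → ℝ, x ≠ 0 → 0 < x ⬝ᵥ (B *ᵥ x))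
    (hB₀ : B₀.PosDef)
    (c₁ c₂ : ℝ) (hc₁ : 0 < c₁) (hc₂ : 0 < c₂)
    (h1 : ∀ x : Fin n → ℝ, c₁ * (x ⬝ᵥ (B₀ *ᵥ x)) ≤ x ⬝ᵥ (B *ᵥ x))
    (h2 : ∀ x y : Fin n → ℝ, x ⬝ᵥ (B *ᵥ y) ≤
      c₂ * Real.sqrt (x ⬝ᵥ (B₀ *ᵥ x)) * Real.sqrt (y ⬝ᵥ (B₀ *ᵥ y))) :
    (∀ x : Fin n → ℝ, (c₁ / c₂^2) * (x ⬝ᵥ (B₀⁻¹ *ᵥ x)) ≤ x ⬝ᵥ (B⁻¹ *ᵥ x)) ∧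
    (∀ x y : Fin n → ℝ, x ⬝ᵥ (B⁻¹ *ᵥ y) ≤
      c₁⁻¹ * Real.sqrt (x ⬝ᵥ (B₀⁻¹ *ᵥ x)) * Real.sqrt (y ⬝ᵥ (B₀⁻¹ *ᵥ y))) := by
  have hB₀d : IsUnit B₀.det := isUnit_iff_ne_zero.mpr hB₀.det_pos.ne'
  have hB₀inv : B₀ * B₀⁻¹ = 1 := Matrix.mul_nonsing_inv _ hB₀d
  have hBinj : Function.Injective B.mulVec := by
    intro a b hab
    by_contra hne
    have h0 : B *ᵥ (a - b) = 0 := by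
      rw [Matrix.mulVec_sub]
      rw [show B.mulVec a = B *ᵥ a from rfl] at hab
      rw [hab, sub_self]
    have := hB (a - b) (fun hs => hne (sub_eq_zero.mp hs))
    rw [h0, dotProduct_zero] at this
    exact lt_irrefl 0 this
  have hBd : B * B⁻¹ = 1 := Matrix.mul_nonsing_inv B
    ((Matrix.isUnit_iff_isUnit_det B).mp (Matrix.mulVec_injective_iff_isUnit.mp hBinj))
  have hBv : ∀ v, B *ᵥ (B⁻¹ *ᵥ v) = v := fun v => by
    rw [Matrix.mulVec_mulVec, hBd, Matrix.one_mulVec]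
  have hB₀v : ∀ v, B₀ *ᵥ (B₀⁻¹ *ᵥ v) = v := fun v => by
    rw [Matrix.mulVec_mulVec, hB₀inv, Matrix.one_mulVec]
  have hMT : B₀ᵀ = B₀ := by have := hB₀.1; simp at this; exact this.eq
  -- mixed Cauchy–Schwarz
  have mcs : ∀ x u : Fin n → ℝ, x ⬝ᵥ u ≤
      Real.sqrt (x ⬝ᵥ (B₀⁻¹ *ᵥ x)) * Real.sqrt (u ⬝ᵥ (B₀ *ᵥ u)) := by
    intro x u
    set z := B₀⁻¹ *ᵥ x with hz
    have hzx : B₀ *ᵥ z = x := hB₀v x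
    have e1 : x ⬝ᵥ u = z ⬝ᵥ (B₀ *ᵥ u) := by
      rw [Matrix.dotProduct_mulVec, ← Matrix.mulVec_transpose, hMT, hzx]
    have e2 : x ⬝ᵥ (B₀⁻¹ *ᵥ x) = z ⬝ᵥ (B₀ *ᵥ z) := by
      rw [hzx, ← hz, dotProduct_comm]
    rw [e1, e2]
    exact cs_aux hB₀ z u
  constructor
  · intro x
    set u := B⁻¹ *ᵥ x with hu
    set w := B₀⁻¹ *ᵥ x with hw
    have hxu : B *ᵥ u = x := hBv x
    have hxw : B₀ *ᵥ w = x := hB₀v x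
    set W := w ⬝ᵥ (B₀ *ᵥ w) with hW'
    set U := u ⬝ᵥ (B₀ *ᵥ u) with hU'
    have hWnn : 0 ≤ W := by simpa using hB₀.posSemidef.dotProduct_mulVec_nonneg w
    have hUnn : 0 ≤ U := by simpa using hB₀.posSemidef.dotProduct_mulVec_nonneg u
    have e1 : x ⬝ᵥ (B₀⁻¹ *ᵥ x) = W := by rw [hW', hxw, ← hw, dotProduct_comm]
    have e2 : x ⬝ᵥ (B⁻¹ *ᵥ x) = u ⬝ᵥ (B *ᵥ u) := by rw [hxu, ← hu, dotProduct_comm]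
    have key : W ≤ c₂ * Real.sqrt W * Real.sqrt U := by
      have := h2 w u
      rwa [hxu, show w ⬝ᵥ x = W from by rw [hW', hxw, dotProduct_comm]] at this
    have hWU : W ≤ c₂^2 * U := by
      nlinarith [Real.sq_sqrt hWnn, Real.sq_sqrt hUnn, Real.sqrt_nonneg W,
        Real.sqrt_nonneg U, sq_nonneg (c₂ * Real.sqrt U - Real.sqrt W)]
    rw [e1, e2]
    have step : c₁ / c₂^2 * W ≤ c₁ / c₂^2 * (c₂^2 * U) :=
      mul_le_mul_of_nonneg_left hWU (by positivity)
    have eq1 : c₁ / c₂^2 * (c₂^2 * U) = c₁ * U := by field_simp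
    calc c₁ / c₂^2 * W ≤ c₁ * U := by rw [← eq1]; exact step
    _ ≤ u ⬝ᵥ (B *ᵥ u) := h1 u
  · intro x y
    set u := B⁻¹ *ᵥ y with hu
    have hyu : B *ᵥ u = y := hBv y
    set P := x ⬝ᵥ (B₀⁻¹ *ᵥ x) with hP'
    set Q := y ⬝ᵥ (B₀⁻¹ *ᵥ y) with hQ'
    set U := u ⬝ᵥ (B₀ *ᵥ u) with hU'
    have hUnn : 0 ≤ U := by simpa using hB₀.posSemidef.dotProduct_mulVec_nonneg u
    have step1 : x ⬝ᵥ (B⁻¹ *ᵥ y) ≤ Real.sqrt P * Real.sqrt U := mcs x u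
    have step2 : c₁ * U ≤ Real.sqrt Q * Real.sqrt U := by
      have ha : c₁ * U ≤ u ⬝ᵥ (B *ᵥ u) := h1 u
      have hb' : u ⬝ᵥ (B *ᵥ u) = y ⬝ᵥ u := by rw [hyu, dotProduct_comm]
      have hc' : y ⬝ᵥ u ≤ Real.sqrt Q * Real.sqrt U := mcs y u
      linarith [hb' ▸ ha]
    have hsU : Real.sqrt U ≤ c₁⁻¹ * Real.sqrt Q := by
      rcases (Real.sqrt_nonneg U).eq_or_lt with h0 | h0
      · rw [← h0]
        positivity
      · have hU2 : U = Real.sqrt U * Real.sqrt U := (Real.mul_self_sqrt hUnn).symm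
        have : c₁ * Real.sqrt U * Real.sqrt U ≤ Real.sqrt Q * Real.sqrt U := by
          nlinarith
        have h3 : c₁ * Real.sqrt U ≤ Real.sqrt Q := le_of_mul_le_mul_right this h0
        rw [inv_mul_eq_div, le_div_iff₀ hc₁]
        linarith [h3]
    calc x ⬝ᵥ (B⁻¹ *ᵥ y) ≤ Real.sqrt P * Real.sqrt U := step1
    _ ≤ Real.sqrt P * (c₁⁻¹ * Real.sqrt Q) :=
        mul_le_mul_of_nonneg_left hsU (Real.sqrt_nonneg P)
    _ = c₁⁻¹ * Real.sqrt P * Real.sqrt Q := by ring
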